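/- Let G be a group such that every subgroup of infinite index in G is locally free and no subgroup of finite index in G is locally free. Then there exists a subgroup Γ ≤ G of infinite index such that every subgroup of G strictly containing Γ has finite index in G. -/

import Mathlib

/-- A group is locally free if every finitely generated subgroup of it is a free group. -/
def IsLocallyFree (G : Type*) [Group G] : Prop :=
  ∀ H : Subgroup G, H.FG → Nonempty (IsFreeGroup H)

/-- Local freeness transfers to subgroups below a locally free subgroup. -/
lemma isFreeGroup_of_le {G : Type*} [Group G] {K C : Subgroup G} (hKC : K ≤ C)
    (hC : IsLocallyFree C) (hK : K.FG) : Nonempty (IsFreeGroup K) := by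
  have hfg : Group.FG K := (Group.fg_iff_subgroup_fg K).2 hK
  have e : K.subgroupOf C ≃* K := Subgroup.subgroupOfEquivOfLe hKC
  have hfg' : Group.FG (K.subgroupOf C) :=
    Group.fg_of_surjective (f := e.symm.toMonoidHom) e.symm.surjective
  obtain ⟨hf⟩ := hC (K.subgroupOf C) ((Group.fg_iff_subgroup_fg _).1 hfg')
  exact ⟨IsFreeGroup.ofMulEquiv e⟩

theorem exists_maximal_infinite_index_subgroup {G : Type*} [Group G]
    (h₁ : ∀ H : Subgroup G, H.index = 0 → IsLocallyFree H)
    (h₂ : ∀ H : Subgroup G, H.index ≠ 0 → ¬ IsLocallyFree H) :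
    ∃ Γ : Subgroup G, Γ.index = 0 ∧ ∀ Δ : Subgroup G, Γ < Δ → Δ.index ≠ 0 := by
  -- the trivial subgroup is locally free, hence has infinite index
  have hbotfree : IsLocallyFree (⊥ : Subgroup G) := by
    intro H _
    haveI : Subsingleton H := by
      constructor
      rintro ⟨⟨a, ha⟩, _⟩ ⟨⟨b, hb⟩, _⟩
      simp only [Subgroup.mem_bot] at ha hb
      subst ha; subst hb; rfl
    haveI : Unique H := ⟨⟨1⟩, fun a => Subsingleton.elim a 1⟩
    exact ⟨IsFreeGroup.ofMulEquiv (G := FreeGroup Empty) MulEquiv.ofUnique⟩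
  have hbot : (⊥ : Subgroup G).index = 0 := by
    by_contra h
    exact h₂ ⊥ h hbotfree
  -- Zorn's lemma on the set of infinite-index subgroups
  have hchain : ∀ c ⊆ {H : Subgroup G | H.index = 0}, IsChain (· ≤ ·) c → ∀ y ∈ c,
      ∃ ub ∈ {H : Subgroup G | H.index = 0}, ∀ z ∈ c, z ≤ ub := by
    intro c hcs hc y hy
    refine ⟨sSup c, ?_, fun z hz => le_sSup hz⟩
    have hdir : DirectedOn (· ≤ ·) c := hc.directedOn
    have hne : c.Nonempty := ⟨y, hy⟩
    -- every finite subset of sSup c is contained in a member of the chain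
    have key : ∀ S : Set G, S.Finite → S ⊆ ↑(sSup c) → ∃ C ∈ c, S ⊆ ↑C := by
      intro S hSfin
      refine Set.Finite.induction_on (motive := fun s _ => s ⊆ ↑(sSup c) → ∃ C ∈ c, s ⊆ ↑C) S hSfin (fun _ => ⟨y, hy, by simp⟩) ?_
      rintro a s _ _ ih hsub
      rw [Set.insert_subset_iff] at hsub
      obtain ⟨C, hC, hCs⟩ := ih hsub.2
      obtain ⟨D, hD, haD⟩ := (Subgroup.mem_sSup_of_directedOn hne hdir).1 hsub.1
      obtain ⟨E, hE, hCE, hDE⟩ := hdir C hC D hD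
      exact ⟨E, hE, Set.insert_subset (hDE haD) (fun x hx => hCE (hCs hx))⟩
    -- sSup c is locally free
    have hlf : IsLocallyFree ↥(sSup c) := by
      intro H hH
      set K : Subgroup G := H.map (sSup c).subtype with hKdef
      have e : H ≃* K := H.equivMapOfInjective _ (Subgroup.subtype_injective _)
      have hKfg : K.FG := by
        haveI : Group.FG H := (Group.fg_iff_subgroup_fg H).2 hH
        exact (Group.fg_iff_subgroup_fg K).1
          (Group.fg_of_surjective (f := e.toMonoidHom) e.surjective)
      obtain ⟨S, hScl, hSfin⟩ := (Subgroup.fg_iff K).1 hKfg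
      have hKle : K ≤ sSup c := by
        rintro x ⟨x', _, rfl⟩
        exact x'.2
      obtain ⟨C, hC, hCs⟩ := key S hSfin
        (fun s hs => hKle (hScl ▸ Subgroup.subset_closure hs))
      have hKC : K ≤ C := hScl ▸ (Subgroup.closure_le C).2 hCs
      obtain ⟨hf⟩ := isFreeGroup_of_le hKC (h₁ C (hcs hC)) hKfg
      exact ⟨IsFreeGroup.ofMulEquiv e.symm⟩
    by_contra h
    exact h₂ (sSup c) h hlf
  obtain ⟨m, -, hm⟩ := zorn_le_nonempty₀ _ hchain ⊥ hbot
  exact ⟨m, hm.1, fun Δ hΔ h0 => hΔ.ne (le_antisymm hΔ.le (hm.2 h0 hΔ.le))⟩
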